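/- Let θ be a Diophantine real number, i.e. there exist constants c > 0 and k > 0 such that |qθ − p| ≥ c/qᵏ for every integer p and every positive integer q. Then for every smooth 1-periodic function h : ℝ → ℝ there exists a smooth 1-periodic function ψ : ℝ → ℝ such that h(z) − ∫₀¹ h(t) dt = ψ(z + θ) − ψ(z) for all z ∈ ℝ. -/

import Mathlib

open Real Complex Function Set
open scoped FourierTransform


instance kolmo_fact01 : Fact ((0:ℝ) < 1) := ⟨one_pos⟩

lemma fourier_norm_one {T : ℝ} (n : ℤ) (x : AddCircle T) : ‖(fourier n x : ℂ)‖ = 1 := by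
  rw [fourier_apply]
  exact Circle.norm_coe _

lemma fourier_smooth (n : ℤ) :
    ContDiff ℝ (⊤ : ℕ∞) (fun x : ℝ => (fourier n (x : AddCircle (1:ℝ)) : ℂ)) := by
  have : (fun x : ℝ => (fourier n (x : AddCircle (1:ℝ)) : ℂ))
      = fun x : ℝ => Complex.exp ((2 * π * Complex.I * n) * (x : ℂ)) := by
    funext x
    rw [fourier_coe_apply]
    norm_num
  rw [this]
  exact Complex.contDiff_exp.comp (contDiff_const.mul Complex.ofRealCLM.contDiff)

lemma deriv_mul_fourier (n : ℤ) (b : ℂ) :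
    deriv (fun x : ℝ => b * fourier n (x : AddCircle (1:ℝ)))
      = fun x : ℝ => ((2 * π * Complex.I * n) * b) * fourier n (x : AddCircle (1:ℝ)) := by
  funext x
  have := ((hasDerivAt_fourier 1 n x).const_mul b).deriv
  rw [this]
  push_cast
  ring

lemma iteratedDeriv_mul_fourier (n : ℤ) (k : ℕ) (b : ℂ) :
    iteratedDeriv k (fun x : ℝ => b * fourier n (x : AddCircle (1:ℝ)))
      = fun x : ℝ => (2 * π * Complex.I * n)^k * b * fourier n (x : AddCircle (1:ℝ)) := by
  induction k generalizing b with
  | zero => simp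
  | succ k ih =>
    rw [iteratedDeriv_succ', deriv_mul_fourier, ih]
    funext x
    rw [pow_succ]
    ring

lemma norm_iteratedFDeriv_mul_fourier (n : ℤ) (k : ℕ) (b : ℂ) (x : ℝ) :
    ‖iteratedFDeriv ℝ k (fun x : ℝ => b * fourier n (x : AddCircle (1:ℝ))) x‖
      = (2 * π * |(n:ℝ)|)^k * ‖b‖ := by
  rw [norm_iteratedFDeriv_eq_norm_iteratedDeriv, iteratedDeriv_mul_fourier]
  simp only [norm_mul, norm_pow, fourier_norm_one, mul_one]
  congr 2
  simp [Complex.norm_def, Complex.normSq_apply]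
  exact Or.inl Real.pi_pos.le



lemma periodic_deriv' {f : ℝ → ℂ} (hf : Function.Periodic f 1) :
    Function.Periodic (deriv f) 1 := by
  intro x
  have h2 : (fun y : ℝ => f (y + 1)) = f := funext hf
  rw [← deriv_comp_add_const f 1 x, h2]

lemma periodic_iterate {f : ℝ → ℂ} (hf : Function.Periodic f 1) (m : ℕ) :
    Function.Periodic (deriv^[m] f) 1 := by
  induction m with
  | zero => exact hf
  | succ m ih => rw [Function.iterate_succ_apply']; exact periodic_deriv' ih

lemma coeff_deriv {g : ℝ → ℂ} (hg : ContDiff ℝ (⊤:ℕ∞) g) (hp : Function.Periodic g 1)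
    {n : ℤ} (hn : n ≠ 0) :
    fourierCoeffOn one_pos g n
      = 1 / (2 * π * Complex.I * n) * fourierCoeffOn one_pos (deriv g) n := by
  have h1 := fourierCoeffOn_of_hasDerivAt one_pos hn
    (f := g) (f' := deriv g)
    (fun x _ => (hg.differentiable (by simp) x).hasDerivAt)
    ((hg.continuous_deriv (mod_cast le_top)).intervalIntegrable 0 1)
  have hg10 : g 1 - g 0 = 0 := by
    have := hp 0; rw [zero_add] at this; rw [this, sub_self]
  rw [h1, hg10, mul_zero, zero_sub]
  have hn' : (n:ℂ) ≠ 0 := Int.cast_ne_zero.mpr hn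
  have hπ : (π:ℂ) ≠ 0 := Complex.ofReal_ne_zero.mpr Real.pi_ne_zero
  have hI := Complex.I_ne_zero
  push_cast
  field_simp
  simp



lemma coeff_norm_le {g : ℝ → ℂ} (hg : Continuous g) {M : ℝ}
    (hM : ∀ x ∈ Set.Icc (0:ℝ) 1, ‖g x‖ ≤ M) (n : ℤ) :
    ‖fourierCoeffOn one_pos g n‖ ≤ M := by
  rw [fourierCoeffOn_eq_integral]
  have h0 : ∀ x ∈ Set.uIoc (0:ℝ) 1, ‖(fourier (-n) (x : AddCircle (1-0:ℝ)) : ℂ) • g x‖ ≤ M := by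
    intro x hx
    rw [Set.uIoc_of_le zero_le_one] at hx
    rw [norm_smul, fourier_norm_one]
    simpa using hM x ⟨hx.1.le, hx.2⟩
  have := intervalIntegral.norm_integral_le_of_norm_le_const h0
  calc ‖(1/(1-0:ℝ)) • ∫ x in (0:ℝ)..1, (fourier (-n) (x : AddCircle (1-0:ℝ)) : ℂ) • g x‖
      = ‖∫ x in (0:ℝ)..1, (fourier (-n) (x : AddCircle (1-0:ℝ)) : ℂ) • g x‖ := by
        norm_num
    _ ≤ M * |(1:ℝ) - 0| := this
    _ = M := by norm_num

lemma coeff_iter {g : ℝ → ℂ} (hg : ContDiff ℝ (⊤:ℕ∞) g) (hp : Function.Periodic g 1)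
    (m : ℕ) {n : ℤ} (hn : n ≠ 0) :
    fourierCoeffOn one_pos g n
      = (1 / (2 * π * Complex.I * n))^m * fourierCoeffOn one_pos (deriv^[m] g) n := by
  induction m with
  | zero => simp
  | succ m ih =>
    rw [ih, coeff_deriv (hg.iterate_deriv m) (periodic_iterate hp m) hn,
      Function.iterate_succ_apply', pow_succ]
    ring

lemma coeff_decay {g : ℝ → ℂ} (hg : ContDiff ℝ (⊤:ℕ∞) g) (hp : Function.Periodic g 1)
    (m : ℕ) :
    ∃ C, 0 ≤ C ∧ ∀ n : ℤ, n ≠ 0 →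
      ‖fourierCoeffOn one_pos g n‖ ≤ C / |(n:ℝ)|^m := by
  obtain ⟨M, hM⟩ := isCompact_Icc.exists_bound_of_continuousOn
    ((hg.iterate_deriv m).continuous.continuousOn :
      ContinuousOn (deriv^[m] g) (Set.Icc (0:ℝ) 1))
  refine ⟨max M 0, le_max_right _ _, fun n hn => ?_⟩
  have hn0 : (0:ℝ) < |(n:ℝ)| := by
    simp only [abs_pos, Int.cast_ne_zero]; exact hn
  have hb := coeff_norm_le (g := deriv^[m] g) (M := max M 0) (hg.iterate_deriv m).continuous
    (fun x hx => (hM x hx).trans (le_max_left _ _)) n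
  rw [coeff_iter hg hp m hn, norm_mul, norm_pow]
  have hnorm : ‖1 / (2 * (π:ℂ) * Complex.I * n)‖ ≤ 1 / |(n:ℝ)| := by
    rw [norm_div, norm_one]
    simp only [norm_mul, Complex.norm_I, mul_one]
    rw [Complex.norm_ofNat, Complex.norm_real, Complex.norm_intCast]
    rw [Real.norm_eq_abs, _root_.abs_of_nonneg Real.pi_pos.le,
      div_le_div_iff₀ (by positivity) hn0]
    nlinarith [Real.pi_gt_three, abs_nonneg (n:ℝ)]
  calc ‖1 / (2 * (π:ℂ) * Complex.I * n)‖^m * ‖fourierCoeffOn one_pos (deriv^[m] g) n‖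
      ≤ (1/|(n:ℝ)|)^m * max M 0 := by
        apply mul_le_mul (pow_le_pow_left₀ (norm_nonneg _) hnorm m) hb (norm_nonneg _)
        positivity
    _ = max M 0 / |(n:ℝ)|^m := by rw [div_pow, one_pow]; ring



lemma norm_exp_two_mul_sub_one (x : ℝ) :
    ‖Complex.exp (2 * (x:ℂ) * Complex.I) - 1‖ = 2 * |Real.sin x| := by
  have key : Complex.exp (2 * (x:ℂ) * Complex.I) - 1
      = Complex.exp ((x:ℂ) * Complex.I) * (2 * Complex.I * Complex.sin x) := by
    rw [Complex.sin]
    have e1 : Complex.exp ((x:ℂ)*Complex.I) * Complex.exp ((x:ℂ)*Complex.I)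
        = Complex.exp (2*(x:ℂ)*Complex.I) := by rw [← Complex.exp_add]; ring_nf
    have e2 : Complex.exp ((x:ℂ)*Complex.I) * Complex.exp (-(x:ℂ)*Complex.I) = 1 := by
      rw [← Complex.exp_add]; ring_nf; exact Complex.exp_zero
    have hI : Complex.I * Complex.I = -1 := Complex.I_mul_I
    calc Complex.exp (2 * (x:ℂ) * Complex.I) - 1
        = Complex.exp ((x:ℂ)*Complex.I) * Complex.exp ((x:ℂ)*Complex.I)
          - Complex.exp ((x:ℂ)*Complex.I) * Complex.exp (-(x:ℂ)*Complex.I) := by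
          rw [e1, e2]
      _ = Complex.exp ((x:ℂ) * Complex.I) *
            (2 * Complex.I * ((Complex.exp (-(x:ℂ) * Complex.I)
              - Complex.exp ((x:ℂ) * Complex.I)) * Complex.I / 2)) := by
          field_simp
          ring_nf
          rw [Complex.I_sq]
          ring
  rw [key, norm_mul]
  rw [Complex.norm_exp_ofReal_mul_I]
  simp only [norm_mul, Complex.norm_ofNat, Complex.norm_I, mul_one, one_mul]
  rw [← Complex.ofReal_sin, Complex.norm_real, Real.norm_eq_abs]

lemma norm_fourier_sub_one (t : ℝ) :
    ‖(fourier 1 (t : AddCircle (1:ℝ)) : ℂ) - 1‖ = 2 * |Real.sin (π * t)| := by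
  rw [fourier_coe_apply]
  have : (2 * (π:ℂ) * Complex.I * ((1:ℤ):ℂ) * (t:ℂ) / ((1:ℝ):ℂ)) = 2 * ((π * t : ℝ) : ℂ) * Complex.I := by
    push_cast; ring
  rw [this, norm_exp_two_mul_sub_one]

lemma abs_sin_ge (t : ℝ) : 2 * |t - round t| ≤ |Real.sin (π * t)| := by
  set r := round t
  set s := t - r with hs
  have h1 : Real.sin (π * t) = (-1)^r * Real.sin (π * s) := by
    rw [hs]
    have : π * t = π * (t - r) + r * π := by ring
    rw [this, Real.sin_add_int_mul_pi]
  have hs2 : |s| ≤ 1/2 := abs_sub_round t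
  have h2 : |Real.sin (π * t)| = |Real.sin (π * s)| := by
    rw [h1, abs_mul]
    rcases Int.even_or_odd r with hr | hr
    · rw [hr.neg_one_zpow]; norm_num
    · rw [hr.neg_one_zpow]; norm_num
  rw [h2]
  have h3 : |Real.sin (π * s)| = Real.sin (π * |s|) := by
    rcases abs_cases s with ⟨h, _⟩ | ⟨h, _⟩
    · rw [h, _root_.abs_of_nonneg]
      apply Real.sin_nonneg_of_nonneg_of_le_pi
      · positivity
      · nlinarith [Real.pi_pos]
    · rw [h, show π * -s = -(π * s) by ring, Real.sin_neg]
      refine _root_.abs_of_nonpos ?_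
      apply Real.sin_nonpos_of_nonpos_of_neg_pi_le
      · nlinarith [Real.pi_pos]
      · nlinarith [Real.pi_pos]
  rw [h3]
  have h4 := Real.mul_le_sin (x := π * |s|) (by positivity)
    (by nlinarith [Real.pi_pos])
  calc 2 * |s| = 2/π * (π * |s|) := by field_simp
    _ ≤ Real.sin (π * |s|) := h4


lemma norm_fourier_sub_one' (n : ℤ) (θ : ℝ) :
    ‖(fourier n (θ : AddCircle (1:ℝ)) : ℂ) - 1‖ = 2 * |Real.sin (π * ((n:ℝ) * θ))| := by
  rw [fourier_coe_apply]
  have : (2 * (π:ℂ) * Complex.I * (n:ℂ) * (θ:ℂ) / ((1:ℝ):ℂ))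
      = 2 * ((π * ((n:ℝ) * θ) : ℝ) : ℂ) * Complex.I := by push_cast; ring
  rw [this, norm_exp_two_mul_sub_one]

lemma small_divisor {θ c k : ℝ} (hc : 0 < c) (hk : 0 < k)
    (hdio : ∀ (p : ℤ) (q : ℕ), 0 < q → c / (q : ℝ) ^ k ≤ |(q : ℝ) * θ - (p : ℝ)|)
    (n : ℤ) (hn : n ≠ 0) :
    c / |(n:ℝ)| ^ (⌈k⌉₊ : ℕ) ≤ ‖(fourier n (θ : AddCircle (1:ℝ)) : ℂ) - 1‖ := by
  set t := (n:ℝ) * θ with ht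
  have hC : 2 * |t - round t| ≤ |Real.sin (π * t)| := abs_sin_ge t
  rw [norm_fourier_sub_one']
  have hq : 0 < n.natAbs := Int.natAbs_pos.mpr hn
  have hqr : ((n.natAbs : ℕ) : ℝ) = |(n:ℝ)| := by
    rw [Nat.cast_natAbs, Int.cast_abs]
  have h1n : (1:ℝ) ≤ |(n:ℝ)| := by
    rw [← hqr]
    exact_mod_cast hq
  -- Diophantine bound
  have hB : c / |(n:ℝ)| ^ k ≤ |t - round t| := by
    rcases le_or_gt 0 n with hpos | hneg
    · have hn' : (0:ℝ) ≤ (n:ℝ) := by exact_mod_cast hpos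
      have h2 := hdio (round t) n.natAbs hq
      rw [hqr, _root_.abs_of_nonneg hn'] at h2
      rw [_root_.abs_of_nonneg hn']
      exact h2
    · have hn' : (n:ℝ) ≤ 0 := by exact_mod_cast hneg.le
      have h2 := hdio (-round t) n.natAbs hq
      rw [hqr, _root_.abs_of_nonpos hn'] at h2
      rw [show -(n:ℝ) * θ - ((-round t : ℤ) : ℝ) = -(t - round t) by push_cast [ht]; ring,
        abs_neg] at h2
      rw [_root_.abs_of_nonpos hn']
      exact h2
  have hA : c / |(n:ℝ)| ^ (⌈k⌉₊ : ℕ) ≤ c / |(n:ℝ)| ^ k := by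
    apply div_le_div_of_nonneg_left hc.le (Real.rpow_pos_of_pos (by linarith) k)
    rw [← Real.rpow_natCast]
    exact Real.rpow_le_rpow_of_exponent_le h1n (Nat.le_ceil k)
  have h0 : 0 ≤ |t - round t| := abs_nonneg _
  linarith



lemma fourier_add_point (n : ℤ) (x y : AddCircle (1:ℝ)) :
    (fourier n (x + y) : ℂ) = fourier n x * fourier n y := by
  simp_rw [fourier_apply, zsmul_add, AddCircle.toCircle_add, Circle.coe_mul]


set_option maxHeartbeats 2000000 in
theorem stmt_4 (θ : ℝ)
    (hθ : ∃ c : ℝ, 0 < c ∧ ∃ k : ℝ, 0 < k ∧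
      ∀ (p : ℤ) (q : ℕ), 0 < q → c / (q : ℝ) ^ k ≤ |(q : ℝ) * θ - (p : ℝ)|)
    (h : ℝ → ℝ) (hsmooth : ContDiff ℝ (⊤ : ℕ∞) h) (hper : ∀ z : ℝ, h (z + 1) = h z) :
    ∃ ψ : ℝ → ℝ, ContDiff ℝ (⊤ : ℕ∞) ψ ∧ (∀ z : ℝ, ψ (z + 1) = ψ z) ∧
      ∀ z : ℝ, h z - ∫ t in (0:ℝ)..1, h t = ψ (z + θ) - ψ z := by
  classical
  obtain ⟨c, hc, k, hk, hdio⟩ := hθ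
  set K : ℕ := ⌈k⌉₊ with hK
  -- the complex-valued version of h
  set hC : ℝ → ℂ := fun t => (h t : ℂ) with hhC
  have hCsmooth : ContDiff ℝ (⊤ : ℕ∞) hC := Complex.ofRealCLM.contDiff.comp hsmooth
  have hCper : Function.Periodic hC 1 := fun x => by simp [hhC, hper x]
  set cn : ℤ → ℂ := fun n => fourierCoeffOn one_pos hC n with hcn
  -- small divisors
  set u : ℤ → ℂ := fun n => (fourier n (θ : AddCircle (1:ℝ)) : ℂ) - 1 with hu
  have hu_lower : ∀ n : ℤ, n ≠ 0 → c / |(n:ℝ)| ^ K ≤ ‖u n‖ :=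
    fun n hn => small_divisor hc hk hdio n hn
  have hu_pos : ∀ n : ℤ, n ≠ 0 → 0 < ‖u n‖ := by
    intro n hn
    refine lt_of_lt_of_le ?_ (hu_lower n hn)
    have : (0:ℝ) < |(n:ℝ)| := by
      simp only [abs_pos, Int.cast_ne_zero]; exact hn
    positivity
  have hu_ne : ∀ n : ℤ, n ≠ 0 → u n ≠ 0 := by
    intro n hn
    exact norm_pos_iff.mp (hu_pos n hn)
  -- the coefficients of ψ
  set a : ℤ → ℂ := fun n => if n = 0 then 0 else cn n / u n with ha
  have ha_decay : ∀ m : ℕ, ∃ C, 0 ≤ C ∧ ∀ n : ℤ, n ≠ 0 → ‖a n‖ ≤ C / |(n:ℝ)| ^ m := by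
    intro m
    obtain ⟨C₁, hC₁, hbound⟩ := coeff_decay hCsmooth hCper (m + K)
    refine ⟨C₁ / c, by positivity, fun n hn => ?_⟩
    have hnpos : (0:ℝ) < |(n:ℝ)| := by
      simp only [abs_pos, Int.cast_ne_zero]; exact hn
    have h1 : ‖a n‖ = ‖cn n‖ / ‖u n‖ := by
      rw [ha]; simp only [if_neg hn, norm_div]
    rw [h1]
    have h2 : ‖cn n‖ / ‖u n‖ ≤ (C₁ / |(n:ℝ)| ^ (m + K)) / (c / |(n:ℝ)| ^ K) := by
      apply div_le_div₀ (by positivity) (hbound n hn) (by positivity) (hu_lower n hn)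
    refine h2.trans (le_of_eq ?_)
    rw [pow_add]
    field_simp
  -- the series defining ψ
  set f : ℤ → ℝ → ℂ := fun n x => a n * (fourier n (x : AddCircle (1:ℝ)) : ℂ) with hf
  set v : ℕ → ℤ → ℝ := fun j n => (2 * π * |(n:ℝ)|) ^ j * ‖a n‖ with hv
  have hv_summable : ∀ j : ℕ, Summable (v j) := by
    intro j
    obtain ⟨C, hC0, hCb⟩ := ha_decay (j + 2)
    apply Summable.of_norm_bounded (g := fun n : ℤ => (C * (2*π)^j) * (1 / (n:ℝ)^2))
      ((summable_one_div_int_pow.mpr one_lt_two).mul_left _)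
    · intro n
      rw [Real.norm_eq_abs, _root_.abs_of_nonneg (by positivity : (0:ℝ) ≤ v j n)]
      by_cases hn : n = 0
      · subst hn
        simp [hv, ha]
      · have hnpos : (0:ℝ) < |(n:ℝ)| := by
          simp only [abs_pos, Int.cast_ne_zero]; exact hn
        have : v j n ≤ (2*π*|(n:ℝ)|)^j * (C / |(n:ℝ)|^(j+2)) := by
          rw [hv]
          exact mul_le_mul_of_nonneg_left (hCb n hn) (by positivity)
        refine this.trans (le_of_eq ?_)
        have hn2 : ((n:ℝ))^2 = |(n:ℝ)|^2 := (_root_.sq_abs _).symm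
        rw [hn2, mul_pow, pow_add]
        field_simp
  set ψC : ℝ → ℂ := fun x => ∑' n : ℤ, f n x with hψC
  have hψC_smooth : ContDiff ℝ (⊤ : ℕ∞) ψC := by
    apply contDiff_tsum (v := v)
    · exact fun n => contDiff_const.mul (fourier_smooth n)
    · exact fun j _ => hv_summable j
    · intro j n x _
      exact le_of_eq (norm_iteratedFDeriv_mul_fourier n j (a n) x)
  have hsum_a : ∀ x : ℝ, HasSum (fun n => f n x) (ψC x) := by
    intro x
    apply Summable.hasSum
    apply Summable.of_norm
    have : ∀ n : ℤ, ‖f n x‖ = v 0 n := by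
      intro n
      show ‖a n * (fourier n (x : AddCircle (1:ℝ)) : ℂ)‖ = (2 * π * |(n:ℝ)|) ^ 0 * ‖a n‖
      rw [norm_mul, fourier_norm_one, mul_one, pow_zero, one_mul]
    rw [funext this]
    exact hv_summable 0
  have hψC_per : ∀ x : ℝ, ψC (x + 1) = ψC x := by
    intro x
    apply tsum_congr
    intro n
    exact congrArg (fun p : AddCircle (1:ℝ) => a n * (fourier n p : ℂ))
      (AddCircle.coe_add_period 1 x)
  -- Fourier series of h converges pointwise
  set Fc : C(AddCircle (1:ℝ), ℂ) :=
    ⟨hCper.lift, continuous_coinduced_dom.mpr hCsmooth.continuous⟩ with hFc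
  have hFc_coe : ∀ x : ℝ, Fc (x : AddCircle (1:ℝ)) = hC x := fun x => hCper.lift_coe x
  have hFc_coeff : ∀ n : ℤ, fourierCoeff (⇑Fc) n = cn n := by
    intro n
    rw [fourierCoeff_eq_intervalIntegral (⇑Fc) n 0]
    simp only [hcn]
    rw [fourierCoeffOn_eq_integral]
    norm_num
    apply intervalIntegral.integral_congr
    intro x _
    simp only [hFc_coe]
  have hsummable_cn : Summable (fourierCoeff (⇑Fc)) := by
    obtain ⟨C₂, hC₂0, hC₂b⟩ := coeff_decay hCsmooth hCper 2
    apply Summable.of_norm_bounded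
      (g := fun n : ℤ => C₂ * (1/(n:ℝ)^2) + (if n = 0 then ‖cn 0‖ else 0))
    · apply Summable.add ((summable_one_div_int_pow.mpr one_lt_two).mul_left _)
      exact (hasSum_ite_eq (0:ℤ) ‖cn 0‖).summable
    · intro n
      rw [hFc_coeff n]
      by_cases hn : n = 0
      · subst hn; simp
      · have hn2 : ((n:ℝ))^2 = |(n:ℝ)|^2 := (_root_.sq_abs _).symm
        rw [if_neg hn, add_zero, mul_one_div, hn2]
        exact hC₂b n hn
  have hFourier : ∀ z : ℝ, HasSum (fun n => cn n * (fourier n (z : AddCircle (1:ℝ)) : ℂ)) (hC z) := by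
    intro z
    have := has_pointwise_sum_fourier_series_of_summable hsummable_cn (z : AddCircle (1:ℝ))
    rw [hFc_coe z] at this
    refine this.congr_fun fun n => ?_
    rw [hFc_coeff n, smul_eq_mul]
  -- value of cn 0
  have hcn0 : cn 0 = ((∫ t in (0:ℝ)..1, h t : ℝ) : ℂ) := by
    simp only [hcn]
    rw [fourierCoeffOn_eq_integral]
    norm_num
    rw [← intervalIntegral.integral_ofReal]
  -- the cohomological equation for ψC
  have hkey : ∀ z : ℝ, ψC (z + θ) - ψC z = hC z - cn 0 := by
    intro z
    have S3 := (hsum_a (z + θ)).sub (hsum_a z)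
    have S4 := (hFourier z).sub (hasSum_ite_eq (0:ℤ) (cn 0))
    have hfun : (fun n : ℤ => f n (z + θ) - f n z)
        = fun n : ℤ => cn n * (fourier n (z : AddCircle (1:ℝ)) : ℂ)
            - (if n = 0 then cn 0 else 0) := by
      funext n
      by_cases hn : n = 0
      · subst hn
        simp [hf, ha, fourier_zero]
      · have hcoe : ((z + θ : ℝ) : AddCircle (1:ℝ))
            = (z : AddCircle (1:ℝ)) + (θ : AddCircle (1:ℝ)) := by
          push_cast
          rfl
        rw [hf]
        simp only [if_neg hn, sub_zero]
        rw [hcoe, fourier_add_point]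
        have hune := hu_ne n hn
        have key : a n * u n = cn n := by
          simp only [ha, if_neg hn]
          exact div_mul_cancel₀ _ hune
        calc a n * ((fourier n (z : AddCircle (1:ℝ)) : ℂ) * (fourier n (θ : AddCircle (1:ℝ)) : ℂ))
              - a n * (fourier n (z : AddCircle (1:ℝ)) : ℂ)
            = (a n * u n) * (fourier n (z : AddCircle (1:ℝ)) : ℂ) := by
              simp only [hu]; ring
          _ = cn n * (fourier n (z : AddCircle (1:ℝ)) : ℂ) := by rw [key]
    rw [hfun] at S3
    exact S3.unique S4
  -- conclude with the real part
  refine ⟨fun x => (ψC x).re, ?_, ?_, ?_⟩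
  · exact Complex.reCLM.contDiff.comp hψC_smooth
  · intro z
    show (ψC (z + 1)).re = (ψC z).re
    rw [hψC_per z]
  · intro z
    show h z - ∫ t in (0:ℝ)..1, h t = (ψC (z + θ)).re - (ψC z).re
    have h5 := congrArg Complex.re (hkey z)
    simp only [Complex.sub_re] at h5
    rw [h5, hcn0]
    simp [hhC]
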